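/- The map ψ(r,θ) = (r cos θ, r sin 2θ, −2r, r(sin θ − (1/3)sin³θ)) from ℝ² (polar coordinates interpretation: here (r,θ) ∈ ℝ_{>0} × ℝ) to ℝ⁴ satisfies ψ*ω = 0 where ω = dx∧dy + dt∧dz, i.e., ψ is an isotropic (Lagrangian) map. -/

import Mathlib

/-- Evaluation of the symplectic form `ω = dx∧dy + dt∧dz` on `ℝ⁴`
(coordinates `(x,y,t,z)`). -/
def omegaEval (u v : ℝ × ℝ × ℝ × ℝ) : ℝ :=
  u.1 * v.2.1 - u.2.1 * v.1 + u.2.2.1 * v.2.2.2 - u.2.2.2 * v.2.2.1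

/-- The map `ψ(r,θ) = (r cos θ, r sin 2θ, −2r, r(sin θ − sin³θ/3))`. -/
noncomputable def psi (p : ℝ × ℝ) : ℝ × ℝ × ℝ × ℝ :=
  (p.1 * Real.cos p.2, p.1 * Real.sin (2 * p.2), -2 * p.1,
    p.1 * (Real.sin p.2 - (1 / 3) * Real.sin p.2 ^ 3))

lemma psi_fderiv_apply (p : ℝ × ℝ) (u : ℝ × ℝ) :
    fderiv ℝ psi p u =
      (u.1 * Real.cos p.2 - p.1 * Real.sin p.2 * u.2,
       u.1 * Real.sin (2 * p.2) + p.1 * (2 * Real.cos (2 * p.2)) * u.2,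
       -2 * u.1,
       u.1 * (Real.sin p.2 - (1 / 3) * Real.sin p.2 ^ 3)
         + p.1 * (Real.cos p.2 - Real.sin p.2 ^ 2 * Real.cos p.2) * u.2) := by
  have hfst : HasFDerivAt (fun q : ℝ × ℝ => q.1) (ContinuousLinearMap.fst ℝ ℝ ℝ) p :=
    hasFDerivAt_fst
  have hsnd : HasFDerivAt (fun q : ℝ × ℝ => q.2) (ContinuousLinearMap.snd ℝ ℝ ℝ) p :=
    hasFDerivAt_snd
  have hcos : HasFDerivAt (fun q : ℝ × ℝ => Real.cos q.2)
      (-Real.sin p.2 • ContinuousLinearMap.snd ℝ ℝ ℝ) p :=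
    (Real.hasDerivAt_cos p.2).comp_hasFDerivAt p hsnd
  have hsin2 : HasFDerivAt (fun q : ℝ × ℝ => Real.sin (2 * q.2))
      ((Real.cos (2 * p.2) * 2) • ContinuousLinearMap.snd ℝ ℝ ℝ) p := by
    have h2 : HasFDerivAt (fun q : ℝ × ℝ => 2 * q.2)
        ((2:ℝ) • ContinuousLinearMap.snd ℝ ℝ ℝ) p := by
      simpa [Function.comp_def] using ((hasDerivAt_id p.2).const_mul 2).comp_hasFDerivAt p hsnd
    simpa [smul_smul, Function.comp_def] using (Real.hasDerivAt_sin (2 * p.2)).comp_hasFDerivAt p h2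
  have hsin : HasFDerivAt (fun q : ℝ × ℝ => Real.sin q.2)
      (Real.cos p.2 • ContinuousLinearMap.snd ℝ ℝ ℝ) p :=
    (Real.hasDerivAt_sin p.2).comp_hasFDerivAt p hsnd
  have h1 := hfst.mul hcos
  have h2 := hfst.mul hsin2
  have h3 : HasFDerivAt (fun q : ℝ × ℝ => -2 * q.1)
      ((-2:ℝ) • ContinuousLinearMap.fst ℝ ℝ ℝ) p := by
    have := hfst.const_mul (-2 : ℝ)
    convert this using 1
  have h4inner : HasFDerivAt (fun q : ℝ × ℝ => Real.sin q.2 - (1 / 3) * Real.sin q.2 ^ 3)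
      ((Real.cos p.2 - Real.sin p.2 ^ 2 * Real.cos p.2) • ContinuousLinearMap.snd ℝ ℝ ℝ) p := by
    have hpow : HasFDerivAt (fun q : ℝ × ℝ => Real.sin q.2 ^ 3)
        (((3:ℕ) * Real.sin p.2 ^ 2) • (Real.cos p.2 • ContinuousLinearMap.snd ℝ ℝ ℝ)) p := by
      simpa [Function.comp_def] using (hasDerivAt_pow 3 (Real.sin p.2)).comp_hasFDerivAt p hsin
    have := hsin.sub (hpow.const_mul (1 / 3 : ℝ))
    refine this.congr_fderiv ?_
    refine ContinuousLinearMap.ext fun w => ?_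
    simp [ContinuousLinearMap.smul_apply, smul_eq_mul]
    ring
  have h4 := hfst.mul h4inner
  have H := (h1.prodMk (h2.prodMk (h3.prodMk h4))).fderiv
  have hpsi : psi = fun q : ℝ × ℝ =>
      ((fun q : ℝ × ℝ => q.1 * Real.cos q.2) q,
       (fun q : ℝ × ℝ => q.1 * Real.sin (2 * q.2)) q,
       (fun q : ℝ × ℝ => -2 * q.1) q,
       (fun q : ℝ × ℝ => q.1 * (Real.sin q.2 - (1 / 3) * Real.sin q.2 ^ 3)) q) := rfl
  rw [hpsi]
  erw [H]
  simp [ContinuousLinearMap.smul_apply, ContinuousLinearMap.add_apply, smul_eq_mul]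
  refine ⟨by ring, by ring, by ring⟩

/-- `ψ*ω = 0` on `ℝ_{>0} × ℝ`: `ψ` is an isotropic (Lagrangian) map. -/
theorem psi_isotropic :
    ∀ p : ℝ × ℝ, 0 < p.1 →
      ∀ u v : ℝ × ℝ, omegaEval (fderiv ℝ psi p u) (fderiv ℝ psi p v) = 0 := by
  intro p _ u v
  rw [psi_fderiv_apply, psi_fderiv_apply]
  unfold omegaEval
  simp only
  rw [Real.sin_two_mul, Real.cos_two_mul]
  have hs := Real.sin_sq_add_cos_sq p.2
  linear_combination ((u.1 * v.2 - u.2 * v.1) * 4 * p.1 * Real.cos p.2) * hs
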